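/- Let s_1,...,s_N be strings over an ordered alphabet and consider sorting them by a mixed LSD/MSD radix-like procedure: maintain for each h a stable arrangement satisfying 'position of s_i precedes position of s_j iff s_i[1..h] ≤ s_j[1..h] (lexicographically on length-h prefixes)'. If the arrangement for h−1 satisfies this invariant, and the arrangement for h is obtained by scanning the (h−1)-arrangement left to right and stably distributing each string into buckets keyed by its first symbol (where the remaining suffix of each string, shifted by one, equals the corresponding string of the previous level), then the arrangement for h also satisfies the invariant. -/
import Mathlib


/-- The mixed LSD/MSD radix sorting invariant (Holt–McMillan style), abstract
version.  `s 0, …, s (N-1)` are strings over an ordered alphabet; an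
arrangement is given by a ranking `π`.  `Inv h π` states that the arrangement
sorts the strings by their length-`h` prefixes: strictly smaller prefixes come
strictly earlier, and earlier positions have lexicographically ≤ prefixes. -/
def RadixInv {A : Type} [LinearOrder A] {N : ℕ}
    (s : Fin N → List A) (h : ℕ) (π : Fin N → Fin N) : Prop :=
  ∀ i j : Fin N,
    (List.Lex (· < ·) ((s i).take h) ((s j).take h) → π i < π j) ∧
    (π i < π j → (List.Lex (· < ·) ((s i).take h) ((s j).take h) ∨
      (s i).take h = (s j).take h))

/-- If the arrangement `π` for level `h−1` satisfies the invariant, and the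
arrangement `π'` for level `h` is obtained by scanning the `(h−1)`-arrangement
and stably distributing each string into buckets keyed by its first symbol
(the remaining suffix, shifted by one, being the string `pred i` of the
previous level: `(s i).take h = (s i).take 1 ++ (s (pred i)).take (h−1)`),
then `π'` satisfies the invariant for `h`. -/
theorem stmt_19 {A : Type} [LinearOrder A] {N : ℕ}
    (s : Fin N → List A) (h : ℕ) (hh : 1 ≤ h)
    (hlen : ∀ i, h ≤ (s i).length)
    (pred : Fin N → Fin N)
    (hpred : ∀ i, (s i).take h = (s i).take 1 ++ (s (pred i)).take (h - 1))
    (π π' : Fin N → Fin N)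
    (hInv : RadixInv s (h - 1) π)
    (hdist : ∀ i j c c', (s i).take 1 = [c] → (s j).take 1 = [c'] →
      (π' i < π' j ↔ (c < c' ∨ (c = c' ∧ π (pred i) < π (pred j))))) :
    RadixInv s h π' := by
  intro i j
  obtain ⟨a, ta, ha⟩ : ∃ a t, s i = a :: t := by
    cases e : s i with
    | nil => have := hlen i; rw [e] at this; simp at this; omega
    | cons a t => exact ⟨a, t, rfl⟩
  obtain ⟨b, tb, hb⟩ : ∃ b t, s j = b :: t := by
    cases e : s j with
    | nil => have := hlen j; rw [e] at this; simp at this; omega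
    | cons b t => exact ⟨b, t, rfl⟩
  have h1i : (s i).take 1 = [a] := by rw [ha]; simp
  have h1j : (s j).take 1 = [b] := by rw [hb]; simp
  have hti : (s i).take h = a :: (s (pred i)).take (h - 1) := by
    have := hpred i; rw [h1i] at this; simpa using this
  have htj : (s j).take h = b :: (s (pred j)).take (h - 1) := by
    have := hpred j; rw [h1j] at this; simpa using this
  constructor
  · intro hlex
    rw [hti, htj] at hlex
    rw [hdist i j a b h1i h1j]
    cases hlex with
    | cons hl => exact Or.inr ⟨rfl, (hInv (pred i) (pred j)).1 hl⟩
    | rel hab => exact Or.inl hab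
  · intro hlt
    rcases (hdist i j a b h1i h1j).1 hlt with hab | ⟨rfl, hp⟩
    · left; rw [hti, htj]; exact List.Lex.rel hab
    · rcases (hInv (pred i) (pred j)).2 hp with hlex | heq
      · left; rw [hti, htj]; exact List.Lex.cons hlex
      · right; rw [hti, htj, heq]
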